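/- Every tree in the family 𝒯 (trees obtainable from P_4 by repeated application of operations O_1–O_4) satisfies γ_t(T) = τ(T) and, moreover, has a set which is simultaneously a minimum total dominating set and a minimum vertex cover. -/

import Mathlib

open SimpleGraph

/-- `D` is a total dominating set of `G`: every vertex has a neighbor in `D`. -/
def IsTotalDomSet {V : Type*} (G : SimpleGraph V) (D : Finset V) : Prop :=
  ∀ v : V, ∃ u ∈ D, G.Adj v u

/-- `X` is a vertex cover of `G`: every edge has an endpoint in `X`. -/
def IsVertexCover {V : Type*} (G : SimpleGraph V) (X : Finset V) : Prop :=
  ∀ ⦃a b : V⦄, G.Adj a b → a ∈ X ∨ b ∈ X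

/-- The total domination number `γ_t(G)`. -/
noncomputable def gammaT {V : Type*} (G : SimpleGraph V) : ℕ :=
  sInf {n | ∃ D : Finset V, IsTotalDomSet G D ∧ D.card = n}

/-- The vertex cover number `τ(G)`. -/
noncomputable def tau {V : Type*} (G : SimpleGraph V) : ℕ :=
  sInf {n | ∃ X : Finset V, _root_.IsVertexCover G X ∧ X.card = n}

/-- A `(γ_t-τ)`-set: simultaneously a minimum total dominating set and a
minimum vertex cover. -/
def IsGttSet {V : Type*} (G : SimpleGraph V) (D : Finset V) : Prop :=
  IsTotalDomSet G D ∧ _root_.IsVertexCover G D ∧ D.card = gammaT G ∧ D.card = tau G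

/-- The sum `G +_{uv} H`: the disjoint union of `G` and `H` with the extra edge `uv`. -/
def graphSum {α β : Type*} (G : SimpleGraph α) (H : SimpleGraph β) (u : α) (v : β) :
    SimpleGraph (α ⊕ β) :=
  SimpleGraph.fromRel (fun x y =>
    (∃ a b, x = Sum.inl a ∧ y = Sum.inl b ∧ G.Adj a b) ∨
    (∃ a b, x = Sum.inr a ∧ y = Sum.inr b ∧ H.Adj a b) ∨
    (x = Sum.inl u ∧ y = Sum.inr v))

/-- The private neighborhood `pn(u,S) = {w : N(w) ∩ S = {u}}`. -/
def pn {V : Type*} (G : SimpleGraph V) (S : Finset V) (u : V) : Set V :=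
  {w | G.neighborSet w ∩ ↑S = {u}}

/-- `v` is quasi-isolated: for some minimum total dominating set `S` there is
`u ∈ S` with `pn(u,S) = {v}`. -/
def QuasiIsolated {V : Type*} (G : SimpleGraph V) (v : V) : Prop :=
  ∃ S : Finset V, IsTotalDomSet G S ∧ S.card = gammaT G ∧ ∃ u ∈ S, pn G S u = {v}

/-- An end vertex: a vertex of degree 1. -/
def IsEndVertex {V : Type*} (G : SimpleGraph V) (v : V) : Prop :=
  (G.neighborSet v).ncard = 1

/-- The family `𝒯` of trees obtained from `P_4` by repeated application of the
operations `O_1`–`O_4` (closed under isomorphism). -/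
inductive InFamilyT : {V : Type} → SimpleGraph V → Prop where
  | base : InFamilyT (SimpleGraph.pathGraph 4)
  | iso {V W : Type} {G : SimpleGraph V} {H : SimpleGraph W} :
      InFamilyT G → Nonempty (G ≃g H) → InFamilyT H
  | op1 {V : Type} (T : SimpleGraph V) (u : V) :
      InFamilyT T → (∃ D : Finset V, IsGttSet T D ∧ u ∈ D) →
      InFamilyT (graphSum T (SimpleGraph.pathGraph 4) u 0)
  | op2 {V : Type} (T : SimpleGraph V) (u : V) :
      InFamilyT T → (∃ D : Finset V, IsGttSet T D ∧ u ∈ D) →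
      InFamilyT (graphSum T (⊥ : SimpleGraph Unit) u ())
  | op3 {V : Type} (T : SimpleGraph V) (u : V) :
      InFamilyT T → (∃ D : Finset V, IsGttSet T D ∧ u ∈ D) → ¬ QuasiIsolated T u →
      InFamilyT (graphSum T (SimpleGraph.pathGraph 2) u 0)
  | op4 {V : Type} (T : SimpleGraph V) (u : V) :
      InFamilyT T → ¬ QuasiIsolated T u →
      InFamilyT (graphSum T (SimpleGraph.pathGraph 4) u 1)


lemma gammaT_le {V : Type*} {G : SimpleGraph V} {D : Finset V} (h : IsTotalDomSet G D) :
    gammaT G ≤ D.card := Nat.sInf_le ⟨D, h, rfl⟩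

lemma tau_le {V : Type*} {G : SimpleGraph V} {X : Finset V} (h : _root_.IsVertexCover G X) :
    tau G ≤ X.card := Nat.sInf_le ⟨X, h, rfl⟩

lemma gammaT_eq_of {V : Type*} {G : SimpleGraph V} {D : Finset V} {n : ℕ}
    (h1 : IsTotalDomSet G D) (hc : D.card = n)
    (h2 : ∀ E : Finset V, IsTotalDomSet G E → n ≤ E.card) : gammaT G = n := by
  refine le_antisymm (hc ▸ gammaT_le h1) ?_
  have hne : {m | ∃ E : Finset V, IsTotalDomSet G E ∧ E.card = m}.Nonempty := ⟨n, D, h1, hc⟩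
  obtain ⟨E, hE, hEc⟩ := Nat.sInf_mem hne
  exact le_trans (h2 E hE) (le_of_eq hEc)

lemma tau_eq_of {V : Type*} {G : SimpleGraph V} {X : Finset V} {n : ℕ}
    (h1 : _root_.IsVertexCover G X) (hc : X.card = n)
    (h2 : ∀ Y : Finset V, _root_.IsVertexCover G Y → n ≤ Y.card) : tau G = n := by
  refine le_antisymm (hc ▸ tau_le h1) ?_
  have hne : {m | ∃ Y : Finset V, _root_.IsVertexCover G Y ∧ Y.card = m}.Nonempty := ⟨n, X, h1, hc⟩
  obtain ⟨Y, hY, hYc⟩ := Nat.sInf_mem hne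
  exact le_trans (h2 Y hY) (le_of_eq hYc)

section Iso
variable {V W : Type*} {G : SimpleGraph V} {H : SimpleGraph W}

lemma tds_map (e : G ≃g H) {D : Finset V} (h : IsTotalDomSet G D) :
    IsTotalDomSet H (D.map e.toEquiv.toEmbedding) := by
  intro w
  obtain ⟨x, hx, hadj⟩ := h (e.symm w)
  refine ⟨e x, Finset.mem_map_of_mem _ hx, ?_⟩
  have := e.map_adj_iff (v := e.symm w) (w := x)
  rw [e.apply_symm_apply] at this
  exact this.mpr hadj

lemma cover_map (e : G ≃g H) {X : Finset V} (h : _root_.IsVertexCover G X) :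
    _root_.IsVertexCover H (X.map e.toEquiv.toEmbedding) := by
  intro a b hadj
  have : G.Adj (e.symm a) (e.symm b) := by
    have := e.symm.map_adj_iff (v := a) (w := b); exact this.mpr hadj
  rcases h this with h' | h'
  · left
    have := Finset.mem_map_of_mem e.toEquiv.toEmbedding h'
    simpa [e.apply_symm_apply] using this
  · right
    have := Finset.mem_map_of_mem e.toEquiv.toEmbedding h'
    simpa [e.apply_symm_apply] using this

lemma gammaT_iso (e : G ≃g H) : gammaT G = gammaT H := by
  unfold gammaT
  congr 1
  ext n
  constructor
  · rintro ⟨D, hD, rfl⟩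
    exact ⟨_, tds_map e hD, Finset.card_map _⟩
  · rintro ⟨D, hD, rfl⟩
    exact ⟨_, tds_map e.symm hD, Finset.card_map _⟩

lemma tau_iso (e : G ≃g H) : tau G = tau H := by
  unfold tau
  congr 1
  ext n
  constructor
  · rintro ⟨D, hD, rfl⟩
    exact ⟨_, cover_map e hD, Finset.card_map _⟩
  · rintro ⟨D, hD, rfl⟩
    exact ⟨_, cover_map e.symm hD, Finset.card_map _⟩

end Iso

section SumAdj
variable {α β : Type*} {G : SimpleGraph α} {H : SimpleGraph β} {u : α} {v : β}

lemma graphSum_adj_ll {a b : α} : (graphSum G H u v).Adj (Sum.inl a) (Sum.inl b) ↔ G.Adj a b := by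
  simp only [graphSum, fromRel_adj]
  constructor
  · rintro ⟨hne, (⟨a', b', ha, hb, h⟩ | ⟨a', b', ha, hb, h⟩ | ⟨ha, hb⟩) |
      (⟨a', b', ha, hb, h⟩ | ⟨a', b', ha, hb, h⟩ | ⟨ha, hb⟩)⟩ <;>
      simp_all <;> exact h.symm
  · intro h
    exact ⟨by simp [h.ne], Or.inl (Or.inl ⟨a, b, rfl, rfl, h⟩)⟩

lemma graphSum_adj_rr {a b : β} : (graphSum G H u v).Adj (Sum.inr a) (Sum.inr b) ↔ H.Adj a b := by
  simp only [graphSum, fromRel_adj]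
  constructor
  · rintro ⟨hne, (⟨a', b', ha, hb, h⟩ | ⟨a', b', ha, hb, h⟩ | ⟨ha, hb⟩) |
      (⟨a', b', ha, hb, h⟩ | ⟨a', b', ha, hb, h⟩ | ⟨ha, hb⟩)⟩ <;>
      simp_all <;> exact h.symm
  · intro h
    exact ⟨by simp [h.ne], Or.inl (Or.inr (Or.inl ⟨a, b, rfl, rfl, h⟩))⟩

lemma graphSum_adj_lr {a : α} {b : β} :
    (graphSum G H u v).Adj (Sum.inl a) (Sum.inr b) ↔ a = u ∧ b = v := by
  simp only [graphSum, fromRel_adj]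
  constructor
  · rintro ⟨hne, (⟨a', b', ha, hb, h⟩ | ⟨a', b', ha, hb, h⟩ | ⟨ha, hb⟩) |
      (⟨a', b', ha, hb, h⟩ | ⟨a', b', ha, hb, h⟩ | ⟨ha, hb⟩)⟩ <;> simp_all
  · rintro ⟨rfl, rfl⟩
    exact ⟨by simp, Or.inl (Or.inr (Or.inr ⟨rfl, rfl⟩))⟩

lemma graphSum_adj_rl {a : α} {b : β} :
    (graphSum G H u v).Adj (Sum.inr b) (Sum.inl a) ↔ a = u ∧ b = v :=
  (graphSum G H u v).adj_comm _ _ |>.trans graphSum_adj_lr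

end SumAdj

section Proj
variable {α : Type*} {β : Type*} [DecidableEq α] [DecidableEq β]

/-- projection of a finset of `α ⊕ β` to `α`. -/
noncomputable def projL (D : Finset (α ⊕ β)) : Finset α :=
  D.preimage Sum.inl Sum.inl_injective.injOn

@[simp] lemma mem_projL {D : Finset (α ⊕ β)} {a : α} : a ∈ projL D ↔ Sum.inl a ∈ D := by
  simp [projL]

lemma card_projL_add {D : Finset (α ⊕ β)} (B : Finset β) (hB : ∀ b ∈ B, Sum.inr b ∈ D) :
    (projL D).card + B.card ≤ D.card := by
  classical
  have hsub : (projL D).image Sum.inl ∪ B.image Sum.inr ⊆ D := by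
    intro x hx
    rcases Finset.mem_union.mp hx with h | h
    · obtain ⟨a, ha, rfl⟩ := Finset.mem_image.mp h
      exact mem_projL.mp ha
    · obtain ⟨b, hb, rfl⟩ := Finset.mem_image.mp h
      exact hB b hb
  have hdisj : Disjoint ((projL D).image Sum.inl) (B.image Sum.inr) := by
    rw [Finset.disjoint_left]
    rintro x hx hx'
    obtain ⟨a, _, rfl⟩ := Finset.mem_image.mp hx
    obtain ⟨b, _, h⟩ := Finset.mem_image.mp hx'
    exact absurd h (by simp)
  calc (projL D).card + B.card
      = ((projL D).image Sum.inl).card + (B.image Sum.inr).card := by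
        rw [Finset.card_image_of_injective _ Sum.inl_injective,
          Finset.card_image_of_injective _ Sum.inr_injective]
    _ = ((projL D).image Sum.inl ∪ B.image Sum.inr).card :=
        (Finset.card_union_of_disjoint hdisj).symm
    _ ≤ D.card := Finset.card_le_card hsub

variable {G : SimpleGraph α} {H : SimpleGraph β} {u : α} {v : β}

lemma projL_cover {X : Finset (α ⊕ β)} (h : _root_.IsVertexCover (graphSum G H u v) X) :
    _root_.IsVertexCover G (projL X) := by
  intro a b hadj
  rcases h (graphSum_adj_ll.mpr hadj) with h' | h' <;> simp_all

/-- If `w` is a `G`-neighbor of `u`, then `insert w (projL D)` totally dominates `G`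
whenever `D` totally dominates the sum. -/
lemma projL_tds_insert {D : Finset (α ⊕ β)} (h : IsTotalDomSet (graphSum G H u v) D)
    {w : α} (hw : G.Adj u w) : IsTotalDomSet G (insert w (projL D)) := by
  intro z
  obtain ⟨x, hx, hadj⟩ := h (Sum.inl z)
  rcases x with a | b
  · exact ⟨a, Finset.mem_insert_of_mem (mem_projL.mpr hx), graphSum_adj_ll.mp hadj⟩
  · obtain ⟨rfl, rfl⟩ := graphSum_adj_lr.mp hadj
    exact ⟨w, Finset.mem_insert_self _ _, hw⟩

/-- If `u` has a `G`-neighbor inside `projL D`, then `projL D` totally dominates `G`. -/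
lemma projL_tds {D : Finset (α ⊕ β)} (h : IsTotalDomSet (graphSum G H u v) D)
    {a0 : α} (ha0 : a0 ∈ projL D) (hadj0 : G.Adj u a0) : IsTotalDomSet G (projL D) := by
  intro z
  obtain ⟨x, hx, hadj⟩ := h (Sum.inl z)
  rcases x with a | b
  · exact ⟨a, mem_projL.mpr hx, graphSum_adj_ll.mp hadj⟩
  · obtain ⟨rfl, rfl⟩ := graphSum_adj_lr.mp hadj
    exact ⟨a0, ha0, hadj0⟩

end Proj

section QI
variable {α : Type*} {β : Type*} [DecidableEq α] [DecidableEq β]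
variable {G : SimpleGraph α} {H : SimpleGraph β} {u : α} {v : β}

/-- Key lemma: if a total dominating set `D` of the sum contains no `G`-neighbour of `u`
(on the left side), and `w` is a `G`-neighbour of `u` such that `insert w (projL D)` has
minimum cardinality, then `u` is quasi-isolated in `G`. -/
lemma quasiIsolated_of_no_left_neighbor {D : Finset (α ⊕ β)}
    (h : IsTotalDomSet (graphSum G H u v) D)
    (hno : ∀ a : α, G.Adj u a → Sum.inl a ∉ D)
    {w : α} (hw : G.Adj u w)
    (hcard : (insert w (projL D)).card = gammaT G) : QuasiIsolated G u := by
  set S : Finset α := insert w (projL D) with hS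
  have hStds : IsTotalDomSet G S := projL_tds_insert h hw
  have hwA : w ∉ projL D := fun hmem => hno w hw (mem_projL.mp hmem)
  refine ⟨S, hStds, hcard, w, Finset.mem_insert_self _ _, ?_⟩
  ext z
  simp only [pn, Set.mem_setOf_eq, Set.mem_singleton_iff]
  constructor
  · intro hz
    by_contra hzu
    -- z ≠ u, and N(z) ∩ S = {w}
    have hzw : G.Adj z w := by
      have : w ∈ G.neighborSet z ∩ ↑S := by rw [hz]; rfl
      exact this.1
    obtain ⟨x, hx, hadj⟩ := h (Sum.inl z)
    rcases x with a | b
    · -- a ∈ projL D is a neighbor of z, hence a ∈ N(z) ∩ S = {w}, so a = w ∈ projL D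
      have haS : a ∈ G.neighborSet z ∩ ↑S := by
        refine ⟨graphSum_adj_ll.mp hadj, ?_⟩
        exact Finset.mem_coe.mpr (Finset.mem_insert_of_mem (mem_projL.mpr hx))
      rw [hz] at haS
      have : a = w := haS
      exact hwA (mem_projL.mpr (this ▸ hx))
    · obtain ⟨rfl, rfl⟩ := graphSum_adj_lr.mp hadj
      exact hzu rfl
  · rintro rfl
    -- show N(u) ∩ S = {w}
    ext y
    simp only [Set.mem_inter_iff, mem_neighborSet, Finset.mem_coe, Set.mem_singleton_iff]
    constructor
    · rintro ⟨hadj, hyS⟩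
      rcases Finset.mem_insert.mp hyS with rfl | hy
      · rfl
      · exact absurd (mem_projL.mp hy) (hno y hadj)
    · rintro rfl
      exact ⟨hw, Finset.mem_insert_self _ _⟩

end QI

lemma two_le_tds {V : Type*} [Nonempty V] {G : SimpleGraph V} {D : Finset V}
    (h : IsTotalDomSet G D) : 2 ≤ D.card := by
  obtain ⟨x, hx, _⟩ := h (Classical.arbitrary V)
  obtain ⟨y, hy, hadj⟩ := h x
  exact Finset.one_lt_card.mpr ⟨x, hx, y, hy, hadj.ne⟩

section Ops
variable {α : Type*} [DecidableEq α] {β : Type*} {G : SimpleGraph α}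
  {H : SimpleGraph β} {u : α} {v : β}

/-- forced vertex: if `b ≠ v` and all `H`-neighbours of `b` equal `c0`, then any
total dominating set of the sum contains `inr c0`. -/
lemma forced_inr [DecidableEq β] {E : Finset (α ⊕ β)}
    (hE : IsTotalDomSet (graphSum G H u v) E) {b c0 : β} (hbv : b ≠ v)
    (huniq : ∀ c, H.Adj b c → c = c0) : Sum.inr c0 ∈ E := by
  obtain ⟨x, hx, hadj⟩ := hE (Sum.inr b)
  rcases x with a | c
  · exact absurd (graphSum_adj_rl.mp hadj).2 hbv
  · rwa [huniq c (graphSum_adj_rr.mp hadj)] at hx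

lemma bridge_forced {E : Finset (α ⊕ β)}
    (hE : IsTotalDomSet (graphSum G H u v) E)
    (hno : ∀ a : α, G.Adj u a → Sum.inl a ∉ E) : Sum.inr v ∈ E := by
  obtain ⟨x, hx, hadj⟩ := hE (Sum.inl u)
  rcases x with a | c
  · exact absurd hx (hno a (graphSum_adj_ll.mp hadj))
  · obtain ⟨-, rfl⟩ := graphSum_adj_lr.mp hadj
    exact hx

lemma op2_main {D : Finset α} (hD : IsGttSet G D) (hu : u ∈ D) :
    gammaT (graphSum G (⊥ : SimpleGraph Unit) u ()) =
      tau (graphSum G (⊥ : SimpleGraph Unit) u ()) ∧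
    ∃ D' : Finset (α ⊕ Unit), IsGttSet (graphSum G (⊥ : SimpleGraph Unit) u ()) D' := by
  classical
  obtain ⟨htds, hcov, hγ, hτ⟩ := hD
  obtain ⟨w, hwD, hw⟩ := htds u
  set G' := graphSum G (⊥ : SimpleGraph Unit) u () with hG'
  set D' : Finset (α ⊕ Unit) := D.image Sum.inl with hD'
  have hcard : D'.card = D.card := Finset.card_image_of_injective _ Sum.inl_injective
  have h1 : IsTotalDomSet G' D' := by
    rintro (a | b)
    · obtain ⟨d, hd, ha⟩ := htds a
      exact ⟨Sum.inl d, Finset.mem_image_of_mem _ hd, graphSum_adj_ll.mpr ha⟩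
    · exact ⟨Sum.inl u, Finset.mem_image_of_mem _ hu, graphSum_adj_rl.mpr ⟨rfl, rfl⟩⟩
  have h2 : _root_.IsVertexCover G' D' := by
    rintro (a | b) (c | d) hadj
    · rcases hcov (graphSum_adj_ll.mp hadj) with h | h
      · exact Or.inl (Finset.mem_image_of_mem _ h)
      · exact Or.inr (Finset.mem_image_of_mem _ h)
    · obtain ⟨rfl, rfl⟩ := graphSum_adj_lr.mp hadj
      exact Or.inl (Finset.mem_image_of_mem _ hu)
    · obtain ⟨rfl, rfl⟩ := graphSum_adj_rl.mp hadj
      exact Or.inr (Finset.mem_image_of_mem _ hu)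
    · exact absurd (graphSum_adj_rr.mp hadj) (by simp)
  have hγlow : ∀ E : Finset (α ⊕ Unit), IsTotalDomSet G' E → D.card ≤ E.card := by
    intro E hE
    by_cases hul : ∃ a : α, Sum.inl a ∈ E ∧ G.Adj u a
    · obtain ⟨a0, ha0, hadj0⟩ := hul
      have hA := projL_tds hE (mem_projL.mpr ha0) hadj0
      have h3 : gammaT G ≤ (projL E).card := gammaT_le hA
      have h4 : (projL E).card + (∅ : Finset Unit).card ≤ E.card :=
        card_projL_add ∅ (by simp)
      simp only [Finset.card_empty, add_zero] at h4
      omega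
    · push_neg at hul
      have hno : ∀ a : α, G.Adj u a → Sum.inl a ∉ E := fun a ha hmem => hul a hmem ha
      have hv : Sum.inr () ∈ E := bridge_forced hE hno
      have hS := projL_tds_insert hE hw
      have h3 : gammaT G ≤ (insert w (projL E)).card := gammaT_le hS
      have h5 : (insert w (projL E)).card ≤ (projL E).card + 1 := Finset.card_insert_le _ _
      have h4 : (projL E).card + ({()} : Finset Unit).card ≤ E.card :=
        card_projL_add _ (by intro b _; cases b; simpa using hv)
      simp only [Finset.card_singleton] at h4
      omega
  have hτlow : ∀ Y : Finset (α ⊕ Unit), _root_.IsVertexCover G' Y → D.card ≤ Y.card := by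
    intro Y hY
    have h3 : tau G ≤ (projL Y).card := tau_le (projL_cover hY)
    have h4 : (projL Y).card + (∅ : Finset Unit).card ≤ Y.card := card_projL_add ∅ (by simp)
    simp only [Finset.card_empty, add_zero] at h4
    omega
  have hγ' : gammaT G' = D.card := gammaT_eq_of h1 hcard hγlow
  have hτ' : tau G' = D.card := tau_eq_of h2 hcard hτlow
  exact ⟨hγ'.trans hτ'.symm, D', h1, h2, hcard.trans hγ'.symm, hcard.trans hτ'.symm⟩

end Ops

section PathFacts
open SimpleGraph
lemma p2_nbr1 : ∀ c : Fin 2, (pathGraph 2).Adj 1 c → c = 0 := by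
  simp only [pathGraph_adj]; decide
lemma p2_adj01 : (pathGraph 2).Adj 0 1 := by simp only [pathGraph_adj]; decide
lemma p2_cover : ∀ b d : Fin 2, (pathGraph 2).Adj b d → b = 0 ∨ d = 0 := by
  simp only [pathGraph_adj]; decide
lemma p4_nbr0 : ∀ c : Fin 4, (pathGraph 4).Adj 0 c → c = 1 := by
  simp only [pathGraph_adj]; decide
lemma p4_nbr3 : ∀ c : Fin 4, (pathGraph 4).Adj 3 c → c = 2 := by
  simp only [pathGraph_adj]; decide
lemma p4_nbr2 : ∀ c : Fin 4, (pathGraph 4).Adj 2 c → c = 1 ∨ c = 3 := by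
  simp only [pathGraph_adj]; decide
lemma p4_cover : ∀ b d : Fin 4, (pathGraph 4).Adj b d →
    (b = 1 ∨ b = 2) ∨ (d = 1 ∨ d = 2) := by
  simp only [pathGraph_adj]; decide
lemma p4_adj01 : (pathGraph 4).Adj 0 1 := by simp only [pathGraph_adj]; decide
lemma p4_adj12 : (pathGraph 4).Adj 1 2 := by simp only [pathGraph_adj]; decide
lemma p4_adj23 : (pathGraph 4).Adj 2 3 := by simp only [pathGraph_adj]; decide
end PathFacts

section Op3
variable {α : Type*} [DecidableEq α] {G : SimpleGraph α} {u : α}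

lemma op3_main {D : Finset α} (hD : IsGttSet G D) (hu : u ∈ D)
    (hqi : ¬ QuasiIsolated G u) :
    gammaT (graphSum G (SimpleGraph.pathGraph 2) u 0) =
      tau (graphSum G (SimpleGraph.pathGraph 2) u 0) ∧
    ∃ D' : Finset (α ⊕ Fin 2), IsGttSet (graphSum G (SimpleGraph.pathGraph 2) u 0) D' := by
  classical
  obtain ⟨htds, hcov, hγ, hτ⟩ := hD
  obtain ⟨w, hwD, hw⟩ := htds u
  set G' := graphSum G (SimpleGraph.pathGraph 2) u 0 with hG'
  set D' : Finset (α ⊕ Fin 2) := insert (Sum.inr 0) (D.image Sum.inl) with hD'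
  have hcard : D'.card = D.card + 1 := by
    rw [hD', Finset.card_insert_of_notMem (by simp),
      Finset.card_image_of_injective _ Sum.inl_injective]
  have h1 : IsTotalDomSet G' D' := by
    rintro (a | b)
    · obtain ⟨d, hd, ha⟩ := htds a
      exact ⟨Sum.inl d, by simp [hD', hd], graphSum_adj_ll.mpr ha⟩
    · fin_cases b
      · exact ⟨Sum.inl u, by simp [hD', hu], graphSum_adj_rl.mpr ⟨rfl, rfl⟩⟩
      · exact ⟨Sum.inr 0, by simp [hD'], graphSum_adj_rr.mpr p2_adj01.symm⟩
  have h2 : _root_.IsVertexCover G' D' := by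
    rintro (a | b) (c | d) hadj
    · rcases hcov (graphSum_adj_ll.mp hadj) with h | h
      · exact Or.inl (by simp [hD', h])
      · exact Or.inr (by simp [hD', h])
    · obtain ⟨rfl, rfl⟩ := graphSum_adj_lr.mp hadj
      exact Or.inl (by simp [hD', hu])
    · obtain ⟨rfl, rfl⟩ := graphSum_adj_rl.mp hadj
      exact Or.inr (by simp [hD', hu])
    · rcases p2_cover _ _ (graphSum_adj_rr.mp hadj) with h | h
      · exact Or.inl (by simp [hD', h])
      · exact Or.inr (by simp [hD', h])
  have hγlow : ∀ E : Finset (α ⊕ Fin 2), IsTotalDomSet G' E → D.card + 1 ≤ E.card := by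
    intro E hE
    have h0 : Sum.inr 0 ∈ E := forced_inr hE (by decide) p2_nbr1
    by_cases hul : ∃ a : α, Sum.inl a ∈ E ∧ G.Adj u a
    · obtain ⟨a0, ha0, hadj0⟩ := hul
      have h3 : gammaT G ≤ (projL E).card :=
        gammaT_le (projL_tds hE (mem_projL.mpr ha0) hadj0)
      have h4 : (projL E).card + ({0} : Finset (Fin 2)).card ≤ E.card :=
        card_projL_add _ (by simpa using h0)
      simp only [Finset.card_singleton] at h4
      omega
    · push_neg at hul
      have hno : ∀ a : α, G.Adj u a → Sum.inl a ∉ E := fun a ha hmem => hul a hmem ha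
      by_contra hlt
      push_neg at hlt
      have h3 : gammaT G ≤ (insert w (projL E)).card :=
        gammaT_le (projL_tds_insert hE hw)
      have h5 : (insert w (projL E)).card ≤ (projL E).card + 1 := Finset.card_insert_le _ _
      have h4 : (projL E).card + ({0} : Finset (Fin 2)).card ≤ E.card :=
        card_projL_add _ (by simpa using h0)
      simp only [Finset.card_singleton] at h4
      have hScard : (insert w (projL E)).card = gammaT G := by omega
      exact hqi (quasiIsolated_of_no_left_neighbor hE hno hw hScard)
  have hτlow : ∀ Y : Finset (α ⊕ Fin 2), _root_.IsVertexCover G' Y → D.card + 1 ≤ Y.card := by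
    intro Y hY
    have h3 : tau G ≤ (projL Y).card := tau_le (projL_cover hY)
    have hedge01 : G'.Adj (Sum.inr 0) (Sum.inr 1) := graphSum_adj_rr.mpr p2_adj01
    have hedge := hY hedge01
    have h4 : ∃ b : Fin 2, Sum.inr b ∈ Y := by
      rcases hedge with h | h
      · exact ⟨0, h⟩
      · exact ⟨1, h⟩
    obtain ⟨b, hb⟩ := h4
    have h5 : (projL Y).card + ({b} : Finset (Fin 2)).card ≤ Y.card :=
      card_projL_add _ (by simpa using hb)
    simp only [Finset.card_singleton] at h5
    omega
  have hγ' : gammaT G' = D.card + 1 := gammaT_eq_of h1 hcard hγlow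
  have hτ' : tau G' = D.card + 1 := tau_eq_of h2 hcard hτlow
  exact ⟨hγ'.trans hτ'.symm, D', h1, h2, hcard.trans hγ'.symm, hcard.trans hτ'.symm⟩

end Op3

section Op14
variable {α : Type*} [DecidableEq α] {G : SimpleGraph α} {u : α}

lemma tau_lower_P4 {v : Fin 4} {Y : Finset (α ⊕ Fin 4)}
    (hY : _root_.IsVertexCover (graphSum G (SimpleGraph.pathGraph 4) u v) Y) :
    tau G + 2 ≤ Y.card := by
  classical
  have h3 : tau G ≤ (projL Y).card := tau_le (projL_cover hY)
  have he01 : (graphSum G (SimpleGraph.pathGraph 4) u v).Adj (Sum.inr 0) (Sum.inr 1) :=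
    graphSum_adj_rr.mpr p4_adj01
  have he23 : (graphSum G (SimpleGraph.pathGraph 4) u v).Adj (Sum.inr 2) (Sum.inr 3) :=
    graphSum_adj_rr.mpr p4_adj23
  have h4 : ∃ b1 b2 : Fin 4, Sum.inr b1 ∈ Y ∧ Sum.inr b2 ∈ Y ∧ b1 ≠ b2 := by
    rcases hY he01 with h | h <;> rcases hY he23 with h' | h'
    · exact ⟨0, 2, h, h', by decide⟩
    · exact ⟨0, 3, h, h', by decide⟩
    · exact ⟨1, 2, h, h', by decide⟩
    · exact ⟨1, 3, h, h', by decide⟩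
  obtain ⟨b1, b2, hb1, hb2, hne⟩ := h4
  have h5 : (projL Y).card + ({b1, b2} : Finset (Fin 4)).card ≤ Y.card := by
    refine card_projL_add _ ?_
    intro b hb
    rcases Finset.mem_insert.mp hb with rfl | hb
    · exact hb1
    · rw [Finset.mem_singleton.mp hb]; exact hb2
  rw [Finset.card_insert_of_notMem (by simp [hne]), Finset.card_singleton] at h5
  omega

lemma p4_upper_tds {D : Finset α} (htds : IsTotalDomSet G D) {v : Fin 4} :
    IsTotalDomSet (graphSum G (SimpleGraph.pathGraph 4) u v)
      (D.image Sum.inl ∪ {Sum.inr 1, Sum.inr 2}) := by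
  classical
  rintro (a | b)
  · obtain ⟨d, hd, ha⟩ := htds a
    exact ⟨Sum.inl d, by simp [hd], graphSum_adj_ll.mpr ha⟩
  · fin_cases b
    · exact ⟨Sum.inr 1, by simp, graphSum_adj_rr.mpr p4_adj01⟩
    · exact ⟨Sum.inr 2, by simp, graphSum_adj_rr.mpr p4_adj12⟩
    · exact ⟨Sum.inr 1, by simp, graphSum_adj_rr.mpr p4_adj12.symm⟩
    · exact ⟨Sum.inr 2, by simp, graphSum_adj_rr.mpr p4_adj23.symm⟩

lemma p4_forced {v : Fin 4} (hv : v = 0 ∨ v = 1) {E : Finset (α ⊕ Fin 4)}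
    (hE : IsTotalDomSet (graphSum G (SimpleGraph.pathGraph 4) u v) E) :
    Sum.inr 2 ∈ E ∧ ∃ c : Fin 4, Sum.inr c ∈ E ∧ (c = 1 ∨ c = 3) ∧ c ≠ 2 ∧ c ≠ 0 := by
  classical
  have h2 : Sum.inr 2 ∈ E := forced_inr hE (by rcases hv with rfl | rfl <;> decide) p4_nbr3
  obtain ⟨x, hx, hadj⟩ := hE (Sum.inr 2)
  rcases x with a | c
  · have := (graphSum_adj_rl.mp hadj).2
    rcases hv with rfl | rfl <;> simp at this
  · rcases p4_nbr2 c (graphSum_adj_rr.mp hadj) with rfl | rfl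
    · exact ⟨h2, 1, hx, Or.inl rfl, by decide, by decide⟩
    · exact ⟨h2, 3, hx, Or.inr rfl, by decide, by decide⟩

lemma op1_main {D : Finset α} (hD : IsGttSet G D) (hu : u ∈ D) :
    gammaT (graphSum G (SimpleGraph.pathGraph 4) u 0) =
      tau (graphSum G (SimpleGraph.pathGraph 4) u 0) ∧
    ∃ D' : Finset (α ⊕ Fin 4), IsGttSet (graphSum G (SimpleGraph.pathGraph 4) u 0) D' := by
  classical
  obtain ⟨htds, hcov, hγ, hτ⟩ := hD
  obtain ⟨w, hwD, hw⟩ := htds u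
  set G' := graphSum G (SimpleGraph.pathGraph 4) u 0 with hG'
  set D' : Finset (α ⊕ Fin 4) := D.image Sum.inl ∪ {Sum.inr 1, Sum.inr 2} with hD'
  have hcard : D'.card = D.card + 2 := by
    rw [hD', Finset.card_union_of_disjoint (by simp [Finset.disjoint_left]),
      Finset.card_image_of_injective _ Sum.inl_injective]
    rfl
  have h1 : IsTotalDomSet G' D' := p4_upper_tds htds
  have h2 : _root_.IsVertexCover G' D' := by
    rintro (a | b) (c | d) hadj
    · rcases hcov (graphSum_adj_ll.mp hadj) with h | h
      · exact Or.inl (by simp [hD', h])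
      · exact Or.inr (by simp [hD', h])
    · obtain ⟨rfl, rfl⟩ := graphSum_adj_lr.mp hadj
      exact Or.inl (by simp [hD', hu])
    · obtain ⟨rfl, rfl⟩ := graphSum_adj_rl.mp hadj
      exact Or.inr (by simp [hD', hu])
    · rcases p4_cover _ _ (graphSum_adj_rr.mp hadj) with h | h
      · exact Or.inl (by rcases h with rfl | rfl <;> simp [hD'])
      · exact Or.inr (by rcases h with rfl | rfl <;> simp [hD'])
  have hγlow : ∀ E : Finset (α ⊕ Fin 4), IsTotalDomSet G' E → D.card + 2 ≤ E.card := by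
    intro E hE
    obtain ⟨h2E, c, hcE, hc13, hc2, hc0⟩ := p4_forced (Or.inl rfl) hE
    by_cases hul : ∃ a : α, Sum.inl a ∈ E ∧ G.Adj u a
    · obtain ⟨a0, ha0, hadj0⟩ := hul
      have h3 : gammaT G ≤ (projL E).card :=
        gammaT_le (projL_tds hE (mem_projL.mpr ha0) hadj0)
      have h4 : (projL E).card + ({2, c} : Finset (Fin 4)).card ≤ E.card := by
        refine card_projL_add _ ?_
        intro b hb
        rcases Finset.mem_insert.mp hb with rfl | hb
        · exact h2E
        · rw [Finset.mem_singleton.mp hb]; exact hcE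
      rw [Finset.card_insert_of_notMem (by simp [Ne.symm hc2]), Finset.card_singleton] at h4
      omega
    · push_neg at hul
      have hno : ∀ a : α, G.Adj u a → Sum.inl a ∉ E := fun a ha hmem => hul a hmem ha
      have h0E : Sum.inr 0 ∈ E := bridge_forced hE hno
      have h3 : gammaT G ≤ (insert w (projL E)).card :=
        gammaT_le (projL_tds_insert hE hw)
      have h5 : (insert w (projL E)).card ≤ (projL E).card + 1 := Finset.card_insert_le _ _
      have h4 : (projL E).card + ({0, 2, c} : Finset (Fin 4)).card ≤ E.card := by
        refine card_projL_add _ ?_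
        intro b hb
        rcases Finset.mem_insert.mp hb with rfl | hb
        · exact h0E
        rcases Finset.mem_insert.mp hb with rfl | hb
        · exact h2E
        · rw [Finset.mem_singleton.mp hb]; exact hcE
      have hcc : ({0, 2, c} : Finset (Fin 4)).card = 3 := by
        rw [Finset.card_insert_of_notMem (by simp [Ne.symm hc0]),
          Finset.card_insert_of_notMem (by simp [Ne.symm hc2]), Finset.card_singleton]
      rw [hcc] at h4
      omega
  have hτlow : ∀ Y : Finset (α ⊕ Fin 4), _root_.IsVertexCover G' Y → D.card + 2 ≤ Y.card := by
    intro Y hY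
    have := tau_lower_P4 hY
    omega
  have hγ' : gammaT G' = D.card + 2 := gammaT_eq_of h1 hcard hγlow
  have hτ' : tau G' = D.card + 2 := tau_eq_of h2 hcard hτlow
  exact ⟨hγ'.trans hτ'.symm, D', h1, h2, hcard.trans hγ'.symm, hcard.trans hτ'.symm⟩

lemma op4_main {D : Finset α} (hD : IsGttSet G D) (hqi : ¬ QuasiIsolated G u) :
    gammaT (graphSum G (SimpleGraph.pathGraph 4) u 1) =
      tau (graphSum G (SimpleGraph.pathGraph 4) u 1) ∧
    ∃ D' : Finset (α ⊕ Fin 4), IsGttSet (graphSum G (SimpleGraph.pathGraph 4) u 1) D' := by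
  classical
  obtain ⟨htds, hcov, hγ, hτ⟩ := hD
  obtain ⟨w, hwD, hw⟩ := htds u
  set G' := graphSum G (SimpleGraph.pathGraph 4) u 1 with hG'
  set D' : Finset (α ⊕ Fin 4) := D.image Sum.inl ∪ {Sum.inr 1, Sum.inr 2} with hD'
  have hcard : D'.card = D.card + 2 := by
    rw [hD', Finset.card_union_of_disjoint (by simp [Finset.disjoint_left]),
      Finset.card_image_of_injective _ Sum.inl_injective]
    rfl
  have h1 : IsTotalDomSet G' D' := p4_upper_tds htds
  have h2 : _root_.IsVertexCover G' D' := by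
    rintro (a | b) (c | d) hadj
    · rcases hcov (graphSum_adj_ll.mp hadj) with h | h
      · exact Or.inl (by simp [hD', h])
      · exact Or.inr (by simp [hD', h])
    · obtain ⟨rfl, rfl⟩ := graphSum_adj_lr.mp hadj
      exact Or.inr (by simp [hD'])
    · obtain ⟨rfl, rfl⟩ := graphSum_adj_rl.mp hadj
      exact Or.inl (by simp [hD'])
    · rcases p4_cover _ _ (graphSum_adj_rr.mp hadj) with h | h
      · exact Or.inl (by rcases h with rfl | rfl <;> simp [hD'])
      · exact Or.inr (by rcases h with rfl | rfl <;> simp [hD'])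
  have hγlow : ∀ E : Finset (α ⊕ Fin 4), IsTotalDomSet G' E → D.card + 2 ≤ E.card := by
    intro E hE
    obtain ⟨h2E, c, hcE, hc13, hc2, hc0⟩ := p4_forced (Or.inr rfl) hE
    have h1E : Sum.inr 1 ∈ E := by
      rcases hc13 with rfl | rfl
      · exact hcE
      · exact forced_inr hE (by decide) p4_nbr0
    by_cases hul : ∃ a : α, Sum.inl a ∈ E ∧ G.Adj u a
    · obtain ⟨a0, ha0, hadj0⟩ := hul
      have h3 : gammaT G ≤ (projL E).card :=
        gammaT_le (projL_tds hE (mem_projL.mpr ha0) hadj0)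
      have h4 : (projL E).card + ({1, 2} : Finset (Fin 4)).card ≤ E.card := by
        refine card_projL_add _ ?_
        intro b hb
        rcases Finset.mem_insert.mp hb with rfl | hb
        · exact h1E
        · rw [Finset.mem_singleton.mp hb]; exact h2E
      rw [Finset.card_insert_of_notMem (by decide), Finset.card_singleton] at h4
      omega
    · push_neg at hul
      have hno : ∀ a : α, G.Adj u a → Sum.inl a ∉ E := fun a ha hmem => hul a hmem ha
      by_contra hlt
      push_neg at hlt
      have h3 : gammaT G ≤ (insert w (projL E)).card :=
        gammaT_le (projL_tds_insert hE hw)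
      have h5 : (insert w (projL E)).card ≤ (projL E).card + 1 := Finset.card_insert_le _ _
      have h4 : (projL E).card + ({1, 2} : Finset (Fin 4)).card ≤ E.card := by
        refine card_projL_add _ ?_
        intro b hb
        rcases Finset.mem_insert.mp hb with rfl | hb
        · exact h1E
        · rw [Finset.mem_singleton.mp hb]; exact h2E
      rw [Finset.card_insert_of_notMem (by decide), Finset.card_singleton] at h4
      have hScard : (insert w (projL E)).card = gammaT G := by omega
      exact hqi (quasiIsolated_of_no_left_neighbor hE hno hw hScard)
  have hτlow : ∀ Y : Finset (α ⊕ Fin 4), _root_.IsVertexCover G' Y → D.card + 2 ≤ Y.card := by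
    intro Y hY
    have := tau_lower_P4 hY
    omega
  have hγ' : gammaT G' = D.card + 2 := gammaT_eq_of h1 hcard hγlow
  have hτ' : tau G' = D.card + 2 := tau_eq_of h2 hcard hτlow
  exact ⟨hγ'.trans hτ'.symm, D', h1, h2, hcard.trans hγ'.symm, hcard.trans hτ'.symm⟩

end Op14

section Base
open SimpleGraph

lemma p4_base : gammaT (SimpleGraph.pathGraph 4) = tau (SimpleGraph.pathGraph 4) ∧
    ∃ D : Finset (Fin 4), IsGttSet (SimpleGraph.pathGraph 4) D := by
  have h1 : IsTotalDomSet (pathGraph 4) ({1, 2} : Finset (Fin 4)) := by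
    intro v
    simp only [pathGraph_adj]
    revert v; decide
  have h2 : _root_.IsVertexCover (pathGraph 4) ({1, 2} : Finset (Fin 4)) := by
    intro a b hadj
    rcases p4_cover _ _ hadj with h | h
    · exact Or.inl (by rcases h with rfl | rfl <;> simp)
    · exact Or.inr (by rcases h with rfl | rfl <;> simp)
  have hc : ({1, 2} : Finset (Fin 4)).card = 2 := by decide
  have hγ : gammaT (pathGraph 4) = 2 :=
    gammaT_eq_of h1 hc (fun E hE => two_le_tds hE)
  have hτ : tau (pathGraph 4) = 2 := by
    refine tau_eq_of h2 hc ?_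
    intro Y hY
    rcases hY p4_adj01 with h | h <;> rcases hY p4_adj23 with h' | h'
    · exact Finset.one_lt_card.mpr ⟨0, h, 2, h', by decide⟩
    · exact Finset.one_lt_card.mpr ⟨0, h, 3, h', by decide⟩
    · exact Finset.one_lt_card.mpr ⟨1, h, 2, h', by decide⟩
    · exact Finset.one_lt_card.mpr ⟨1, h, 3, h', by decide⟩
  exact ⟨hγ.trans hτ.symm, {1, 2}, h1, h2, hc.trans hγ.symm, hc.trans hτ.symm⟩

end Base


/-- Every tree in `𝒯` satisfies `γ_t = τ` and has a `(γ_t-τ)`-set. -/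
theorem stmt19 {V : Type} (T : SimpleGraph V) (hT : InFamilyT T) :
    gammaT T = tau T ∧ ∃ D : Finset V, IsGttSet T D := by
  induction hT with
  | base => exact p4_base
  | iso hG he ih =>
    obtain ⟨e⟩ := he
    obtain ⟨heq, D, h1, h2, h3, h4⟩ := ih
    refine ⟨(gammaT_iso e).symm.trans (heq.trans (tau_iso e)), D.map e.toEquiv.toEmbedding,
      tds_map e h1, cover_map e h2, ?_, ?_⟩
    · rw [Finset.card_map, h3, gammaT_iso e]
    · rw [Finset.card_map, h4, tau_iso e]
  | op1 T u hT hD ih =>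
    classical
    obtain ⟨D, hD, hu⟩ := hD
    exact op1_main hD hu
  | op2 T u hT hD ih =>
    classical
    obtain ⟨D, hD, hu⟩ := hD
    exact op2_main hD hu
  | op3 T u hT hD hqi ih =>
    classical
    obtain ⟨D, hD, hu⟩ := hD
    exact op3_main hD hu hqi
  | op4 T u hT hqi ih =>
    classical
    obtain ⟨heq, D, hD⟩ := ih
    exact op4_main hD hqi
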